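/- Let R be an n×n real symmetric positive definite matrix, H an n×p real matrix of full column rank with n > p, and Z an n×q real matrix with columns z₁,…,z_q. Define B̂ := (HᵀR⁻¹H)⁻¹HᵀR⁻¹Z, β̂ₖ := (HᵀR⁻¹H)⁻¹HᵀR⁻¹zₖ, the separable-model scale estimator Σ̂ := (n−p)⁻¹(Z − HB̂)ᵀR⁻¹(Z − HB̂), and the independent-model variance estimators σ̂ₖ² := (n−p)⁻¹(zₖ − Hβ̂ₖ)ᵀR⁻¹(zₖ − Hβ̂ₖ). Then for every k = 1,…,q, the k-th diagonal entry of Σ̂ equals σ̂ₖ². (This is the predictive-variance part of Theorem 1: the marginal predictive scales under the separable model and under the independent model with the same input correlation coincide.) -/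
import Mathlib


open Matrix

/-- the k-th diagonal entry of the separable-model scale estimator
`Σ̂ = (n−p)⁻¹(Z − HB̂)ᵀR⁻¹(Z − HB̂)` equals the independent-model variance estimator
`σ̂ₖ² = (n−p)⁻¹(zₖ − Hβ̂ₖ)ᵀR⁻¹(zₖ − Hβ̂ₖ)`. -/
lemma col_mul_aux {n m q : ℕ} (A : Matrix (Fin n) (Fin m) ℝ) (Z : Matrix (Fin m) (Fin q) ℝ)
    (i : Fin n) (k : Fin q) : (A * Z) i k = (A *ᵥ fun l => Z l k) i := by
  simp [Matrix.mul_apply, Matrix.mulVec, dotProduct]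

theorem separable_scale_diag_eq_independent_variance {n p q : ℕ}
    (R : Matrix (Fin n) (Fin n) ℝ) (H : Matrix (Fin n) (Fin p) ℝ)
    (Z : Matrix (Fin n) (Fin q) ℝ)
    (hR : R.PosDef) (hH : H.rank = p) (hpn : p < n)
    (Bhat : Matrix (Fin p) (Fin q) ℝ)
    (hB : Bhat = (Hᵀ * R⁻¹ * H)⁻¹ * Hᵀ * R⁻¹ * Z)
    (betahat : Fin q → Fin p → ℝ)
    (hbeta : ∀ k, betahat k = ((Hᵀ * R⁻¹ * H)⁻¹ * Hᵀ * R⁻¹) *ᵥ (fun i => Z i k))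
    (Sighat : Matrix (Fin q) (Fin q) ℝ)
    (hSig : Sighat = ((n : ℝ) - (p : ℝ))⁻¹ • ((Z - H * Bhat)ᵀ * R⁻¹ * (Z - H * Bhat)))
    (sigmahat2 : Fin q → ℝ)
    (hsig : ∀ k, sigmahat2 k = ((n : ℝ) - (p : ℝ))⁻¹ *
      (((fun i => Z i k) - H *ᵥ betahat k) ⬝ᵥ (R⁻¹ *ᵥ ((fun i => Z i k) - H *ᵥ betahat k)))) :
    ∀ k : Fin q, Sighat k k = sigmahat2 k := by
  intro k
  have hcol : ∀ i, (Z - H * Bhat) i k = ((fun i => Z i k) - H *ᵥ betahat k) i := by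
    intro i
    rw [hbeta, hB, Matrix.mulVec_mulVec, ← Matrix.mul_assoc, Matrix.sub_apply, Pi.sub_apply,
      col_mul_aux]
  simp only [hSig, hsig k, Matrix.smul_apply, smul_eq_mul]
  congr 1
  simp only [Matrix.mul_apply, Matrix.transpose_apply, dotProduct, Matrix.mulVec, hcol,
    Pi.sub_apply]
  simp only [Finset.sum_mul, Finset.mul_sum]
  rw [Finset.sum_comm]
  refine Finset.sum_congr rfl fun i _ => Finset.sum_congr rfl fun j _ => by ring
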